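/- Let R₁, …, R_m ⊆ ℚ^n be semilinear sets, each satisfying the line condition, and let A ⊆ ℚ^n be a nonempty affine subspace such that aff(R_i ∩ A) = A for every i = 1, …, m. Then aff(R₁ ∩ … ∩ R_m ∩ A) = A; in particular, R₁ ∩ … ∩ R_m ∩ A is nonempty. -/

import Mathlib

/-- A linear set in ℚ^n: the solution set of a finite conjunction of linear
inequalities `c₁x₁+…+cₙxₙ ≤ b` or `c₁x₁+…+cₙxₙ < b` with rational coefficients. -/
def IsLinearSetQ (n : ℕ) (S : Set (Fin n → ℚ)) : Prop :=
  ∃ (m : ℕ) (c : Fin m → Fin n → ℚ) (b : Fin m → ℚ) (strict : Fin m → Bool),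
    S = {x | ∀ i, if strict i then (∑ j, c i j * x j) < b i else (∑ j, c i j * x j) ≤ b i}

/-- A semilinear set: a finite union of linear sets. -/
def IsSemilinear (n : ℕ) (S : Set (Fin n → ℚ)) : Prop :=
  ∃ (k : ℕ) (f : Fin k → Set (Fin n → ℚ)), (∀ i, IsLinearSetQ n (f i)) ∧ S = ⋃ i, f i

/-- The affine hull of S ⊆ ℚ^n: the set of all affine combinations
Σ xᵢ • pᵢ with pᵢ ∈ S, xᵢ ∈ ℚ, Σ xᵢ = 1. -/
def affHull {n : ℕ} (S : Set (Fin n → ℚ)) : Set (Fin n → ℚ) :=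
  {x | ∃ (k : ℕ) (w : Fin k → ℚ) (p : Fin k → (Fin n → ℚ)),
    (∀ i, p i ∈ S) ∧ (∑ i, w i) = 1 ∧ x = ∑ i, w i • p i}

/-- S satisfies the line condition if for all distinct a, b ∈ ℚ^n, whenever
{y ∈ ℚ | (1−y)•a + y•b ∈ S} contains at least two elements, it is unbounded
above and unbounded below. -/
def LineCondition {n : ℕ} (S : Set (Fin n → ℚ)) : Prop :=
  ∀ a b : Fin n → ℚ, a ≠ b →
    (∃ y₁ y₂ : ℚ, y₁ ≠ y₂ ∧ (1 - y₁) • a + y₁ • b ∈ S ∧ (1 - y₂) • a + y₂ • b ∈ S) →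
    (∀ K : ℚ, ∃ y : ℚ, K < y ∧ (1 - y) • a + y • b ∈ S) ∧
    (∀ K : ℚ, ∃ y : ℚ, y < K ∧ (1 - y) • a + y • b ∈ S)

namespace AH

variable {n : ℕ}

lemma subset_affHull (S : Set (Fin n → ℚ)) : S ⊆ affHull S := by
  intro x hx
  exact ⟨1, fun _ => 1, fun _ => x, fun _ => hx, by simp, by simp⟩

lemma affHull_mono {S T : Set (Fin n → ℚ)} (h : S ⊆ T) : affHull S ⊆ affHull T := by
  rintro x ⟨k, w, p, hp, hw, hx⟩
  exact ⟨k, w, p, fun i => h (hp i), hw, hx⟩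

lemma affHull_subset_of {S H : Set (Fin n → ℚ)} (hS : S ⊆ H) (hH : affHull H = H) :
    affHull S ⊆ H := by
  rw [← hH]; exact affHull_mono hS

lemma nonempty_of_affHull {S : Set (Fin n → ℚ)} (h : (affHull S).Nonempty) : S.Nonempty := by
  obtain ⟨x, k, w, p, hp, hw, -⟩ := h
  rcases Nat.eq_zero_or_pos k with rfl | hk
  · simp at hw
  · exact ⟨p ⟨0, hk⟩, hp _⟩

/-- an affine combination over a finset lies in the hull -/
lemma finsetCombo {ι : Type*} [DecidableEq ι] {S : Set (Fin n → ℚ)} (s : Finset ι)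
    (w : ι → ℚ) (p : ι → (Fin n → ℚ)) (hp : ∀ j ∈ s, p j ∈ S)
    (hw : ∑ j ∈ s, w j = 1) : (∑ j ∈ s, w j • p j) ∈ affHull S := by
  classical
  refine ⟨s.card, fun i => w (s.equivFin.symm i), fun i => p (s.equivFin.symm i),
    fun i => hp _ (s.equivFin.symm i).2, ?_, ?_⟩
  · rw [← hw, ← Finset.sum_coe_sort s w]
    exact Fintype.sum_equiv s.equivFin.symm _ _ (fun i => rfl)
  · rw [← Finset.sum_coe_sort s (fun j => w j • p j)]
    exact (Fintype.sum_equiv s.equivFin.symm _ _ (fun i => rfl)).symm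

lemma combo_mem_affHull {S : Set (Fin n → ℚ)} {x y : Fin n → ℚ}
    (hx : x ∈ affHull S) (hy : y ∈ affHull S) (l : ℚ) :
    l • x + (1 - l) • y ∈ affHull S := by
  obtain ⟨k₁, w₁, p₁, hp₁, hw₁, hx⟩ := hx
  obtain ⟨k₂, w₂, p₂, hp₂, hw₂, hy⟩ := hy
  refine ⟨k₁ + k₂, Fin.append (fun i => l * w₁ i) (fun i => (1 - l) * w₂ i),
    Fin.append p₁ p₂, ?_, ?_, ?_⟩
  · intro i
    refine Fin.addCases (fun j => ?_) (fun j => ?_) i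
    · rw [Fin.append_left]; exact hp₁ j
    · rw [Fin.append_right]; exact hp₂ j
  · rw [Fin.sum_univ_add]
    simp only [Fin.append_left, Fin.append_right]
    rw [← Finset.mul_sum, ← Finset.mul_sum, hw₁, hw₂]; ring
  · rw [Fin.sum_univ_add]
    simp only [Fin.append_left, Fin.append_right, mul_smul]
    rw [← Finset.smul_sum, ← Finset.smul_sum, ← hx, ← hy]

/-- 2-point affine combination stays in a hull-closed set -/
lemma affine_two {A : Set (Fin n → ℚ)} (hA : affHull A = A) {p q : Fin n → ℚ}
    (hp : p ∈ A) (hq : q ∈ A) (w₁ w₂ : ℚ) (hw : w₁ + w₂ = 1) : w₁ • p + w₂ • q ∈ A := by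
  have h2 : w₂ = 1 - w₁ := by linarith
  subst h2
  rw [← hA]
  exact combo_mem_affHull (subset_affHull A hp) (subset_affHull A hq) w₁

/-- direction space of a set -/
def dirV (A : Set (Fin n → ℚ)) : Submodule ℚ (Fin n → ℚ) :=
  Submodule.span ℚ {u | ∃ a ∈ A, ∃ b ∈ A, a - b = u}

lemma sub_mem_dirV {A : Set (Fin n → ℚ)} {a b : Fin n → ℚ} (ha : a ∈ A) (hb : b ∈ A) :
    a - b ∈ dirV A :=
  Submodule.subset_span ⟨a, ha, b, hb, rfl⟩

lemma add_dirV_mem {A : Set (Fin n → ℚ)} (hA : affHull A = A) {a₀ : Fin n → ℚ}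
    (ha₀ : a₀ ∈ A) {u : Fin n → ℚ} (hu : u ∈ dirV A) : a₀ + u ∈ A := by
  induction hu using Submodule.span_induction with
  | mem x hx =>
    obtain ⟨a, ha, b, hb, rfl⟩ := hx
    have hm : (1/2 : ℚ) • a₀ + (1/2 : ℚ) • a ∈ A := affine_two hA ha₀ ha _ _ (by norm_num)
    have := affine_two hA hm hb (2 : ℚ) (-1 : ℚ) (by norm_num)
    convert this using 1
    simp only [smul_add, smul_smul]
    norm_num
    abel
  | zero => simpa using ha₀
  | add x y hx hy ihx ihy =>
    have hm : (1/2 : ℚ) • (a₀ + x) + (1/2 : ℚ) • (a₀ + y) ∈ A :=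
      affine_two hA ihx ihy _ _ (by norm_num)
    have := affine_two hA hm ha₀ (2 : ℚ) (-1 : ℚ) (by norm_num)
    convert this using 1
    simp only [smul_add, smul_smul]
    norm_num
    abel
  | smul c x hx ihx =>
    have := affine_two hA ha₀ ihx (1 - c) c (by ring)
    convert this using 1
    simp only [smul_add, sub_smul, one_smul]
    abel


variable {n : ℕ}

/-- dichotomy for a single linear condition along a line -/
lemma cond_dichotomy (β γ : ℚ) (st : Bool) :
    (∃ c : ℚ, ∀ t ≥ c, (if st then β * t < γ else β * t ≤ γ)) ∨
    (∃ K : ℚ, ∀ t : ℚ, (if st then β * t < γ else β * t ≤ γ) → t ≤ K) := by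
  rcases lt_trichotomy β 0 with hβ | hβ | hβ
  · left
    refine ⟨γ / β + 1, fun t ht => ?_⟩
    have h1 : γ / β < t := by linarith
    have h2 : β * t < γ := by
      have := (div_lt_iff_of_neg hβ).mp h1
      linarith
    cases st <;> simp <;> linarith
  · subst hβ
    by_cases hγ : (0:ℚ) < γ
    · left; refine ⟨0, fun t _ => ?_⟩; cases st <;> simp <;> linarith
    · cases st with
      | true => right; refine ⟨0, fun t ht => ?_⟩; simp at ht; exact absurd ht hγ
      | false =>
        by_cases hγ' : (0:ℚ) ≤ γ
        · left; refine ⟨0, fun t _ => ?_⟩; simpa using hγ'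
        · right; refine ⟨0, fun t ht => ?_⟩; simp at ht; exact absurd ht hγ'
  · right
    refine ⟨γ / β, fun t ht => ?_⟩
    have : β * t ≤ γ := by cases st <;> simp at ht <;> linarith
    exact (le_div_iff₀' hβ).mpr this

/-- a linear set's trace along a line either contains a final segment or is bounded above -/
lemma linear_trace (L : Set (Fin n → ℚ)) (hL : IsLinearSetQ n L) (a v : Fin n → ℚ) :
    (∃ c : ℚ, ∀ t ≥ c, a + t • v ∈ L) ∨ (∃ K : ℚ, ∀ t : ℚ, a + t • v ∈ L → t ≤ K) := by
  obtain ⟨m, C, b, st, rfl⟩ := hL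
  have key : ∀ t : ℚ, ∀ i, (∑ j, C i j * (a + t • v) j)
      = (∑ j, C i j * v j) * t + (∑ j, C i j * a j) := by
    intro t i
    rw [Finset.sum_mul, ← Finset.sum_add_distrib]
    congr 1; ext j
    simp [Pi.add_apply, Pi.smul_apply, smul_eq_mul]; ring
  let β : Fin m → ℚ := fun i => ∑ j, C i j * v j
  let γ : Fin m → ℚ := fun i => b i - ∑ j, C i j * a j
  have mem_iff : ∀ t : ℚ, (a + t • v ∈ {x | ∀ i, if st i then (∑ j, C i j * x j) < b i
      else (∑ j, C i j * x j) ≤ b i}) ↔ ∀ i, (if st i then β i * t < γ i else β i * t ≤ γ i) := by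
    intro t
    have hiff : ∀ i, ((if st i then (∑ j, C i j * (a + t • v) j) < b i
        else (∑ j, C i j * (a + t • v) j) ≤ b i)
        ↔ (if st i then β i * t < γ i else β i * t ≤ γ i)) := by
      intro i
      rw [key t i]
      show (if st i then β i * t + _ < b i else β i * t + _ ≤ b i) ↔ _
      cases st i <;> simp only [if_true, if_false, Bool.false_eq_true] <;>
        constructor <;> intro hh <;> simp only [γ] at * <;> linarith
    exact ⟨fun h i => (hiff i).mp (h i), fun h i => (hiff i).mpr (h i)⟩
  by_cases hall : ∀ i, ∃ c : ℚ, ∀ t ≥ c, (if st i then β i * t < γ i else β i * t ≤ γ i)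
  · left
    choose cf hcf using hall
    obtain ⟨M, hM⟩ := Finset.exists_le (Finset.univ.image cf)
    refine ⟨M, fun t ht => (mem_iff t).mpr (fun i => hcf i t (le_trans ?_ ht))⟩
    exact hM _ (Finset.mem_image_of_mem cf (Finset.mem_univ i))
  · right
    obtain ⟨i, hi⟩ := not_forall.mp hall
    rcases cond_dichotomy (β i) (γ i) (st i) with h | h
    · exact absurd h hi
    · obtain ⟨K, hK⟩ := h
      exact ⟨K, fun t ht => hK t ((mem_iff t).mp ht i)⟩

/-- semilinear set unbounded along a line contains a final segment of it -/
lemma semilinear_final {S : Set (Fin n → ℚ)} (hS : IsSemilinear n S) (a v : Fin n → ℚ)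
    (hub : ∀ K : ℚ, ∃ t : ℚ, K < t ∧ a + t • v ∈ S) :
    ∃ c : ℚ, ∀ t ≥ c, a + t • v ∈ S := by
  obtain ⟨k, f, hf, rfl⟩ := hS
  by_cases hex : ∃ l, ∃ c : ℚ, ∀ t ≥ c, a + t • v ∈ f l
  · obtain ⟨l, c, hc⟩ := hex
    exact ⟨c, fun t ht => Set.mem_iUnion.mpr ⟨l, hc t ht⟩⟩
  · exfalso
    have hbd : ∀ l, ∃ K : ℚ, ∀ t : ℚ, a + t • v ∈ f l → t ≤ K := by
      intro l
      rcases linear_trace (f l) (hf l) a v with h | h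
      · exact absurd ⟨l, h⟩ hex
      · exact h
    choose Kf hKf using hbd
    obtain ⟨M, hM⟩ := Finset.exists_le (Finset.univ.image Kf)
    obtain ⟨t, htM, htS⟩ := hub M
    obtain ⟨l, hl⟩ := Set.mem_iUnion.mp htS
    have : t ≤ Kf l := hKf l t hl
    have : Kf l ≤ M := hM _ (Finset.mem_image_of_mem Kf (Finset.mem_univ l))
    linarith


/-- secant closure property: any secant line of X is contained in X outside a bounded set -/
def SecClosed {n : ℕ} (X : Set (Fin n → ℚ)) : Prop :=
  ∀ p ∈ X, ∀ q ∈ X, p ≠ q → ∃ c : ℚ, ∀ t ≥ c,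
    p + t • (q - p) ∈ X ∧ p - t • (q - p) ∈ X

lemma secClosed_inter {R A : Set (Fin n → ℚ)} (hsl : IsSemilinear n R)
    (hl : LineCondition R) (hA : affHull A = A) : SecClosed (R ∩ A) := by
  intro p hp q hq hne
  have hid : ∀ y : ℚ, (1 - y) • p + y • q = p + y • (q - p) := by
    intro y; simp only [sub_smul, one_smul, smul_sub]; abel
  have hline := hl p q hne ⟨0, 1, by norm_num, by simpa using hp.1, by simpa using hq.1⟩
  -- upward final segment
  obtain ⟨c₁, hc₁⟩ : ∃ c : ℚ, ∀ t ≥ c, p + t • (q - p) ∈ R := by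
    apply semilinear_final hsl
    intro K
    obtain ⟨y, hy, hmem⟩ := hline.1 K
    exact ⟨y, hy, by rwa [hid] at hmem⟩
  -- downward final segment
  obtain ⟨c₂, hc₂⟩ : ∃ c : ℚ, ∀ t ≥ c, p + t • (p - q) ∈ R := by
    apply semilinear_final hsl
    intro K
    obtain ⟨y, hy, hmem⟩ := hline.2 (-K)
    refine ⟨-y, by linarith, ?_⟩
    rw [hid] at hmem
    convert hmem using 1
    simp only [smul_sub, neg_smul]; abel
  refine ⟨max c₁ c₂, fun t ht => ⟨⟨hc₁ t (le_trans (le_max_left _ _) ht), ?_⟩,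
    ⟨?_, ?_⟩⟩⟩
  · -- p + t • (q-p) ∈ A
    have := affine_two hA hp.2 hq.2 (1 - t) t (by ring)
    rwa [hid] at this
  · -- p - t • (q-p) ∈ R
    have := hc₂ t (le_trans (le_max_right _ _) ht)
    convert this using 1
    simp only [smul_sub]; abel
  · -- p - t • (q-p) ∈ A
    have := affine_two hA hp.2 hq.2 (1 + t) (-t) (by ring)
    convert this using 1
    simp only [smul_sub, add_smul, one_smul, neg_smul]; abel

lemma affHull_singleton (a : Fin n → ℚ) : affHull {a} = {a} := by
  apply subset_antisymm
  · rintro x ⟨k, w, p, hp, hw, rfl⟩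
    have hp' : ∀ i, p i = a := fun i => hp i
    simp only [hp', Set.mem_singleton_iff, ← Finset.sum_smul, hw, one_smul]
  · exact subset_affHull _

lemma combo_sub {k : ℕ} (w : Fin k → ℚ) (p : Fin k → (Fin n → ℚ)) (hw : ∑ i, w i = 1)
    (z : Fin n → ℚ) : (∑ i, w i • p i) - z = ∑ i, w i • (p i - z) := by
  simp only [smul_sub, Finset.sum_sub_distrib, ← Finset.sum_smul, hw, one_smul]

/-- slices of a hull-closed set by an affine functional level are hull-closed -/
lemma hullClosed_slice {A : Set (Fin n → ℚ)} (hA : affHull A = A) {a₀ : Fin n → ℚ}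
    (φ : (Fin n → ℚ) →ₗ[ℚ] ℚ) (c : ℚ) :
    affHull {a | a ∈ A ∧ φ (a - a₀) = c} = {a | a ∈ A ∧ φ (a - a₀) = c} := by
  apply subset_antisymm
  · rintro x ⟨k, w, p, hp, hw, rfl⟩
    constructor
    · rw [← hA]
      exact ⟨k, w, p, fun i => (hp i).1, hw, rfl⟩
    · rw [combo_sub w p hw a₀, map_sum]
      have : ∀ i, φ (w i • (p i - a₀)) = w i * c := by
        intro i; rw [map_smul, (hp i).2, smul_eq_mul]
      rw [Finset.sum_congr rfl (fun i _ => this i), ← Finset.sum_mul, hw, one_mul]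
  · exact subset_affHull _

/-- restriction of a secant-closed set to a hull-closed set is secant-closed -/
lemma secClosed_restrict {X H : Set (Fin n → ℚ)} (hX : SecClosed X)
    (hH : affHull H = H) : SecClosed (X ∩ H) := by
  intro p hp q hq hne
  obtain ⟨c, hc⟩ := hX p hp.1 q hq.1 hne
  refine ⟨c, fun t ht => ⟨⟨(hc t ht).1, ?_⟩, ⟨(hc t ht).2, ?_⟩⟩⟩
  · have := affine_two hH hp.2 hq.2 (1 - t) t (by ring)
    convert this using 1
    simp only [smul_sub, sub_smul, one_smul]; abel
  · have := affine_two hH hp.2 hq.2 (1 + t) (-t) (by ring)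
    convert this using 1
    simp only [smul_sub, add_smul, one_smul, neg_smul]; abel

/-- a finite subset of `X - p` spanning the direction space, with nonzero elements -/
lemma exists_finset_span {X A : Set (Fin n → ℚ)} (hX : affHull X = A) {p : Fin n → ℚ}
    (hp : p ∈ X) :
    ∃ bf : Finset (Fin n → ℚ), (∀ v ∈ bf, v ≠ 0 ∧ p + v ∈ X) ∧
      Submodule.span ℚ (bf : Set (Fin n → ℚ)) = dirV A := by
  classical
  set s : Set (Fin n → ℚ) := {u | ∃ x ∈ X, x - p = u} with hs
  have hXA : X ⊆ A := by rw [← hX]; exact subset_affHull _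
  have hspan : Submodule.span ℚ s = dirV A := by
    apply le_antisymm
    · rw [Submodule.span_le]
      rintro u ⟨x, hx, rfl⟩
      exact sub_mem_dirV (hXA hx) (hXA hp)
    · rw [dirV, Submodule.span_le]
      rintro u ⟨a, ha, b, hb, rfl⟩
      have key : ∀ a' ∈ A, a' - p ∈ Submodule.span ℚ s := by
        intro a' ha'
        rw [← hX] at ha'
        obtain ⟨k, w, pts, hpts, hw, rfl⟩ := ha'
        rw [combo_sub w pts hw p]
        exact Submodule.sum_mem _ (fun i _ =>
          Submodule.smul_mem _ _ (Submodule.subset_span ⟨pts i, hpts i, rfl⟩))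
      have : a - b = (a - p) - (b - p) := by abel
      rw [this]
      exact Submodule.sub_mem _ (key a ha) (key b hb)
  obtain ⟨b, hbs, hbspan, hbli⟩ := exists_linearIndependent ℚ s
  have hbfin : b.Finite := hbli.setFinite
  refine ⟨hbfin.toFinset, ?_, ?_⟩
  · intro v hv
    rw [Set.Finite.mem_toFinset] at hv
    constructor
    · exact hbli.ne_zero ⟨v, hv⟩
    · obtain ⟨x, hx, hxv⟩ := hbs hv
      rw [← hxv]
      convert hx using 1; abel
  · rw [Set.Finite.coe_toFinset, hbspan, hspan]

/-- a linear functional not vanishing on finitely many nonzero vectors -/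
lemma exists_functional (U : Finset (Fin n → ℚ)) (hU : ∀ v ∈ U, v ≠ 0) :
    ∃ φ : (Fin n → ℚ) →ₗ[ℚ] ℚ, ∀ v ∈ U, φ v ≠ 0 := by
  classical
  induction U using Finset.induction_on with
  | empty => exact ⟨0, by simp⟩
  | @insert u U hu ih =>
    obtain ⟨φ₀, hφ₀⟩ := ih (fun v hv => hU v (Finset.mem_insert_of_mem hv))
    have hu0 : u ≠ 0 := hU u (Finset.mem_insert_self u U)
    have hj : ∃ j, u j ≠ 0 := by
      by_contra hcon; push_neg at hcon; exact hu0 (funext hcon)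
    obtain ⟨j₀, hj₀⟩ := hj
    set ψ : (Fin n → ℚ) →ₗ[ℚ] ℚ := LinearMap.proj j₀ with hψ
    have hψu : ψ u ≠ 0 := hj₀
    set bad : Finset ℚ :=
      (insert u U).image (fun v => if ψ v = 0 then 0 else -(φ₀ v)/(ψ v)) with hbad
    obtain ⟨c, hc⟩ := Infinite.exists_notMem_finset bad
    refine ⟨φ₀ + c • ψ, fun v hv hzero => ?_⟩
    have hzero' : φ₀ v + c * ψ v = 0 := by
      simpa [LinearMap.add_apply, LinearMap.smul_apply, smul_eq_mul] using hzero
    by_cases hψv : ψ v = 0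
    · rcases Finset.mem_insert.mp hv with rfl | hvU
      · exact hψu hψv
      · exact hφ₀ v hvU (by rw [hψv, mul_zero, add_zero] at hzero'; exact hzero')
    · apply hc
      have hceq : c = -(φ₀ v)/(ψ v) := by
        field_simp
        linarith
      rw [hbad, Finset.mem_image]
      exact ⟨v, hv, by rw [if_neg hψv, ← hceq]⟩

/-- degenerate case: direction space is trivial, so A is a singleton -/
lemma bot_case {m : ℕ} {A : Set (Fin n → ℚ)} {X : Fin m → Set (Fin n → ℚ)}
    (hne : A.Nonempty) (hhull : ∀ i, affHull (X i) = A) (hV : dirV A = ⊥) :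
    affHull ((⋂ i, X i) ∩ A) = A := by
  obtain ⟨a₀, ha₀⟩ := hne
  have hAs : A = {a₀} := by
    apply subset_antisymm
    · intro a ha
      have h1 : a - a₀ ∈ dirV A := sub_mem_dirV ha ha₀
      rw [hV, Submodule.mem_bot, sub_eq_zero] at h1
      simp [h1]
    · simp [ha₀]
  have hXs : ∀ i, a₀ ∈ X i := by
    intro i
    have hXne : (X i).Nonempty := nonempty_of_affHull (by rw [hhull i]; exact ⟨a₀, ha₀⟩)
    obtain ⟨x, hx⟩ := hXne
    have hxA : x ∈ A := by rw [← hhull i]; exact subset_affHull _ hx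
    rw [hAs, Set.mem_singleton_iff] at hxA
    rwa [hxA] at hx
  have hset : ((⋂ i, X i) ∩ A) = {a₀} := by
    apply subset_antisymm
    · intro x hx
      rw [← hAs]; exact hx.2
    · intro x hx
      rw [Set.mem_singleton_iff] at hx; subst hx
      exact ⟨Set.mem_iInter.mpr hXs, ha₀⟩
  rw [hset, affHull_singleton, hAs]

lemma main_ind (d : ℕ) : ∀ (m : ℕ) (A : Set (Fin n → ℚ)) (X : Fin m → Set (Fin n → ℚ)),
    A.Nonempty → affHull A = A → (∀ i, SecClosed (X i)) → (∀ i, affHull (X i) = A) →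
    Module.finrank ℚ (dirV A) ≤ d → affHull ((⋂ i, X i) ∩ A) = A := by
  induction d with
  | zero =>
    intro m A X hne hA hsec hhull hrank
    have hV : dirV A = ⊥ := by
      rw [← Submodule.finrank_eq_zero (R := ℚ) (M := Fin n → ℚ)]
      omega
    exact bot_case hne hhull hV
  | succ d ih =>
    intro m A X hne hA hsec hhull hrank
    by_cases hV : dirV A = ⊥
    · exact bot_case hne hhull hV
    rcases Nat.eq_zero_or_pos m with rfl | hm
    · have : (⋂ i : Fin 0, X i) = Set.univ := by simp
      rw [this, Set.univ_inter, hA]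
    -- main case: positive dimension, at least one set
    obtain ⟨a₀, ha₀⟩ := hne
    have hXne : ∀ i, (X i).Nonempty := fun i =>
      nonempty_of_affHull (by rw [hhull i]; exact ⟨a₀, ha₀⟩)
    choose p hpX using hXne
    have hXsubA : ∀ i, X i ⊆ A := fun i => by rw [← hhull i]; exact subset_affHull _
    -- finite spanning direction sets
    have hbfe : ∀ i, ∃ bf : Finset (Fin n → ℚ), (∀ v ∈ bf, v ≠ 0 ∧ p i + v ∈ X i) ∧
        Submodule.span ℚ (bf : Set (Fin n → ℚ)) = dirV A :=
      fun i => exists_finset_span (hhull i) (hpX i)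
    choose bf hbf1 hbf2 using hbfe
    -- functional nonvanishing on all chosen directions
    obtain ⟨φ, hφu⟩ := exists_functional (Finset.univ.biUnion bf) (fun v hv => by
      obtain ⟨i, -, hvi⟩ := Finset.mem_biUnion.mp hv
      exact (hbf1 i v hvi).1)
    have hφ : ∀ i, ∀ v ∈ bf i, φ v ≠ 0 := fun i v hv =>
      hφu v (Finset.mem_biUnion.mpr ⟨i, Finset.mem_univ i, hv⟩)
    have hbfne : ∀ i, (bf i).Nonempty := by
      intro i
      rcases Finset.eq_empty_or_nonempty (bf i) with he | h
      · exfalso; apply hV; rw [← hbf2 i, he]; simp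
      · exact h
    have hbfV : ∀ i, ∀ v ∈ bf i, v ∈ dirV A := fun i v hv => by
      rw [← hbf2 i]; exact Submodule.subset_span hv
    -- thresholds from secant closure
    have hthre : ∀ i, ∀ v : Fin n → ℚ, ∃ c : ℚ, v ∈ bf i →
        (1 ≤ c ∧ ∀ t ≥ c, p i + t • v ∈ X i ∧ p i - t • v ∈ X i) := by
      intro i v
      by_cases hv : v ∈ bf i
      · obtain ⟨hv0, hpv⟩ := hbf1 i v hv
        obtain ⟨c, hc⟩ := hsec i (p i) (hpX i) (p i + v) hpv
          (by intro hcon; exact hv0 (by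
            have := congrArg (fun z => z - p i) hcon; simpa using this.symm))
        refine ⟨max c 1, fun _ => ⟨le_max_right _ _, fun t ht => ?_⟩⟩
        have := hc t (le_trans (le_max_left _ _) ht)
        simpa [add_sub_cancel_left] using this
      · exact ⟨1, fun h => absurd h hv⟩
    choose thr hthr using hthre
    set κ : Fin m → ℚ := fun i => φ (p i - a₀) with hκ
    -- a uniform bound
    have hCe : ∃ C : ℚ, ∀ i, ∀ v ∈ bf i, κ i + thr i v * |φ v| ≤ C := by
      have hCi : ∀ i, ∃ Ci : ℚ, ∀ v ∈ bf i, κ i + thr i v * |φ v| ≤ Ci := by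
        intro i
        obtain ⟨M, hM⟩ := Finset.exists_le ((bf i).image (fun v => κ i + thr i v * |φ v|))
        exact ⟨M, fun v hv => hM _ (Finset.mem_image_of_mem _ hv)⟩
      choose Ci hCi using hCi
      obtain ⟨C, hC⟩ := Finset.exists_le (Finset.univ.image Ci)
      exact ⟨C, fun i v hv => le_trans (hCi i v hv)
        (hC _ (Finset.mem_image_of_mem Ci (Finset.mem_univ i)))⟩
    obtain ⟨C, hC⟩ := hCe
    -- the slices
    set H : ℚ → Set (Fin n → ℚ) := fun c => {a | a ∈ A ∧ φ (a - a₀) = c} with hH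
    have hHaff : ∀ c, affHull (H c) = H c := fun c => hullClosed_slice hA φ c
    have hHsubA : ∀ c, H c ⊆ A := fun c x hx => hx.1
    -- far points on the slices
    have hq : ∀ c, C ≤ c → ∀ i, ∀ v ∈ bf i,
        (p i + ((c - κ i)/(φ v)) • v) ∈ X i ∩ H c := by
      intro c hc i v hv
      have hφv : φ v ≠ 0 := hφ i v hv
      have hbnd := hC i v hv
      have hthr1 := (hthr i v hv).1
      have habs : (0:ℚ) < |φ v| := abs_pos.mpr hφv
      have hgap : thr i v * |φ v| ≤ c - κ i := by linarith
      constructor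
      · -- in X i
        rcases lt_or_gt_of_ne hφv with hneg | hpos
        · have habs' : |φ v| = -(φ v) := abs_of_neg hneg
          have hT : thr i v ≤ -((c - κ i)/(φ v)) := by
            rw [← div_neg]
            apply (le_div_iff₀ (by linarith : (0:ℚ) < -(φ v))).mpr
            rw [habs'] at hgap; linarith
          have := ((hthr i v hv).2 (-((c - κ i)/(φ v))) hT).2
          convert this using 1
          simp only [neg_smul, sub_neg_eq_add]
        · have habs' : |φ v| = φ v := abs_of_pos hpos
          have hT : thr i v ≤ (c - κ i)/(φ v) := by
            apply (le_div_iff₀ hpos).mpr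
            rw [habs'] at hgap; linarith
          exact ((hthr i v hv).2 ((c - κ i)/(φ v)) hT).1
      · -- in H c
        constructor
        · have hmem : (p i - a₀) + ((c - κ i)/(φ v)) • v ∈ dirV A :=
            Submodule.add_mem _ (sub_mem_dirV (hXsubA i (hpX i)) ha₀)
              (Submodule.smul_mem _ _ (hbfV i v hv))
          have := add_dirV_mem hA ha₀ hmem
          convert this using 1
          abel
        · rw [show p i + ((c - κ i)/(φ v)) • v - a₀ = (p i - a₀) + ((c - κ i)/(φ v)) • v by abel,
            map_add, map_smul, smul_eq_mul, div_mul_cancel₀ _ hφv]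
          simp only [hκ]
          ring
    -- hull of each sliced set is the whole slice
    have hXH : ∀ c, C ≤ c → ∀ i, affHull (X i ∩ H c) = H c := by
      intro c hc i
      apply subset_antisymm
      · exact affHull_subset_of Set.inter_subset_right (hHaff c)
      intro h hmemH
      classical
      obtain ⟨v₀, hv₀⟩ := hbfne i
      set t : (Fin n → ℚ) → ℚ := fun v => (c - κ i)/(φ v) with ht
      set q : (Fin n → ℚ) → (Fin n → ℚ) := fun v => p i + t v • v with hqdef
      have hqmem : ∀ v ∈ bf i, q v ∈ X i ∩ H c := fun v hv => hq c hc i v hv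
      have htpos : ∀ v ∈ bf i, t v ≠ 0 := by
        intro v hv
        have hφv : φ v ≠ 0 := hφ i v hv
        have habs : (0:ℚ) < |φ v| := abs_pos.mpr hφv
        have := hC i v hv
        have h1 := (hthr i v hv).1
        have : c - κ i > 0 := by nlinarith
        exact div_ne_zero (by linarith) hφv
      have hu : h - q v₀ ∈ Submodule.span ℚ ((bf i : Set (Fin n → ℚ))) := by
        rw [hbf2 i]
        exact sub_mem_dirV hmemH.1 ((hqmem v₀ hv₀).2.1)
      obtain ⟨g, -, hg⟩ := Submodule.mem_span_finset.mp hu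
      set β : (Fin n → ℚ) → ℚ := fun v => g v / t v with hβ
      have hβt : ∀ v ∈ bf i, β v * t v = g v := fun v hv =>
        div_mul_cancel₀ (g v) (htpos v hv)
      -- φ of the differences vanishes
      have hφq : ∀ v ∈ bf i, φ (q v - q v₀) = 0 := by
        intro v hv
        have h1 := (hqmem v hv).2.2
        have h2 := (hqmem v₀ hv₀).2.2
        have : q v - q v₀ = (q v - a₀) - (q v₀ - a₀) := by abel
        rw [this, map_sub, h1, h2, sub_self]
      -- main linear identity
      have hmain : ∑ v ∈ bf i, β v • (q v - q v₀)
          = (h - q v₀) - ((∑ v ∈ bf i, β v) * t v₀) • v₀ := by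
        have e1 : ∀ v ∈ bf i, β v • (q v - q v₀)
            = g v • v - β v • (t v₀ • v₀) := by
          intro v hv
          have hqq : q v - q v₀ = t v • v - t v₀ • v₀ := by
            simp only [hqdef]; abel
          rw [hqq, smul_sub, smul_smul, hβt v hv]
        rw [Finset.sum_congr rfl e1, Finset.sum_sub_distrib, ← Finset.sum_smul, hg, smul_smul]
      have hs0 : (∑ v ∈ bf i, β v) * t v₀ = 0 := by
        have hφmain := congrArg φ hmain
        rw [map_sum, map_sub, map_smul] at hφmain
        have hL : ∑ v ∈ bf i, φ (β v • (q v - q v₀)) = 0 := by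
          apply Finset.sum_eq_zero
          intro v hv
          rw [map_smul, hφq v hv, smul_zero]
        have hφh : φ (h - q v₀) = 0 := by
          have : h - q v₀ = (h - a₀) - (q v₀ - a₀) := by abel
          rw [this, map_sub, hmemH.2, (hqmem v₀ hv₀).2.2, sub_self]
        rw [hL, hφh, smul_eq_mul] at hφmain
        have : (∑ v ∈ bf i, β v) * t v₀ * φ v₀ = 0 := by linarith
        exact (mul_eq_zero.mp this).resolve_right (hφ i v₀ hv₀)
      have hsum0 : ∑ v ∈ bf i, β v = 0 :=
        (mul_eq_zero.mp hs0).resolve_right (htpos v₀ hv₀)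
      -- the affine combination
      set w : (Fin n → ℚ) → ℚ := fun v => β v + (if v = v₀ then 1 else 0) with hw
      have hwsum : ∑ v ∈ bf i, w v = 1 := by
        rw [hw]
        simp only [Finset.sum_add_distrib, hsum0, Finset.sum_ite_eq' (bf i), if_pos hv₀]
        ring
      have hcombo : ∑ v ∈ bf i, w v • q v = h := by
        have e2 : ∀ v ∈ bf i, w v • q v = β v • (q v - q v₀) + β v • q v₀
            + (if v = v₀ then q v else 0) := by
          intro v hv
          rw [hw]
          simp only [add_smul, smul_sub, ite_smul, one_smul, zero_smul]
          by_cases hvv : v = v₀ <;> simp [hvv] <;> abel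
        rw [Finset.sum_congr rfl e2, Finset.sum_add_distrib, Finset.sum_add_distrib,
          Finset.sum_ite_eq' (bf i), if_pos hv₀, hmain, ← Finset.sum_smul, hsum0]
        simp
      rw [← hcombo]
      exact finsetCombo (bf i) w q (fun v hv => hqmem v hv) hwsum
    -- the slices are nonempty
    set i₀ : Fin m := ⟨0, hm⟩ with hi₀
    obtain ⟨v₁, hv₁⟩ := hbfne i₀
    have hHne : ∀ c, C ≤ c → (H c).Nonempty := fun c hc =>
      ⟨_, (hq c hc i₀ v₁ hv₁).2⟩
    -- rank goes down
    have hrankH : ∀ c, Module.finrank ℚ (dirV (H c)) ≤ d := by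
      intro c
      have hle : dirV (H c) ≤ dirV A ⊓ LinearMap.ker φ := by
        rw [dirV, Submodule.span_le]
        rintro u ⟨a, ⟨haA, haφ⟩, b, ⟨hbA, hbφ⟩, rfl⟩
        refine Submodule.mem_inf.mpr ⟨sub_mem_dirV haA hbA, LinearMap.mem_ker.mpr ?_⟩
        rw [show a - b = (a - a₀) - (b - a₀) by abel, map_sub, haφ, hbφ, sub_self]
      have hlt : dirV A ⊓ LinearMap.ker φ < dirV A := by
        apply lt_of_le_of_ne inf_le_left
        intro heq
        have : v₁ ∈ dirV A ⊓ LinearMap.ker φ := heq.symm ▸ hbfV i₀ v₁ hv₁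
        exact hφ i₀ v₁ hv₁ this.2
      have h1 : Module.finrank ℚ (dirV (H c)) ≤ Module.finrank ℚ (dirV A ⊓ LinearMap.ker φ : Submodule ℚ (Fin n → ℚ)) :=
        Submodule.finrank_mono hle
      have h2 : Module.finrank ℚ (dirV A ⊓ LinearMap.ker φ : Submodule ℚ (Fin n → ℚ)) < Module.finrank ℚ (dirV A) :=
        Submodule.finrank_lt_finrank_of_lt hlt
      omega
    -- recursion
    have hrec : ∀ c, C ≤ c → affHull ((⋂ i, (X i ∩ H c)) ∩ H c) = H c := by
      intro c hc
      exact ih m (H c) (fun i => X i ∩ H c) (hHne c hc) (hHaff c)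
        (fun i => secClosed_restrict (hsec i) (hHaff c)) (fun i => hXH c hc i) (hrankH c)
    -- conclude
    apply subset_antisymm
    · exact affHull_subset_of Set.inter_subset_right hA
    intro a ha
    have hsub : ∀ c, C ≤ c → H c ⊆ affHull ((⋂ i, X i) ∩ A) := by
      intro c hc
      rw [← hrec c hc]
      apply affHull_mono
      rintro x ⟨hx1, hx2⟩
      exact ⟨Set.mem_iInter.mpr (fun i => (Set.mem_iInter.mp hx1 i).1), hx2.1⟩
    have hφv₁ : φ v₁ ≠ 0 := hφ i₀ v₁ hv₁
    set e := φ (a - a₀) with he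
    set μ : ℚ := (e - C)/(φ v₁) with hμ
    set μ' : ℚ := ((C+1) - e)/(φ v₁) with hμ'
    set l : ℚ := C + 1 - e with hl
    have hmemgen : ∀ (ν : ℚ), a + ν • v₁ ∈ A := by
      intro ν
      have hmem : (a - a₀) + ν • v₁ ∈ dirV A :=
        Submodule.add_mem _ (sub_mem_dirV ha ha₀) (Submodule.smul_mem _ _ (hbfV i₀ v₁ hv₁))
      have := add_dirV_mem hA ha₀ hmem
      convert this using 1; abel
    have hφgen : ∀ (ν : ℚ), φ (a + ν • v₁ - a₀) = e + ν * φ v₁ := by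
      intro ν
      rw [show a + ν • v₁ - a₀ = (a - a₀) + ν • v₁ by abel, map_add, map_smul, smul_eq_mul, ← he]
    have hh : a + (-μ) • v₁ ∈ H C := by
      refine ⟨hmemgen _, ?_⟩
      rw [hφgen, hμ, neg_mul, div_mul_cancel₀ _ hφv₁]
      ring
    have hh' : a + μ' • v₁ ∈ H (C+1) := by
      refine ⟨hmemgen _, ?_⟩
      rw [hφgen, hμ', div_mul_cancel₀ _ hφv₁]
      ring
    have hcm := combo_mem_affHull (hsub C le_rfl hh) (hsub (C+1) (by linarith) hh') l
    have hkey : l • (a + (-μ) • v₁) + (1 - l) • (a + μ' • v₁) = a := by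
      have hzero : l * (-μ) + (1 - l) * μ' = 0 := by
        rw [hμ, hμ', hl]
        field_simp
        ring
      have hform : l • (a + (-μ) • v₁) + (1 - l) • (a + μ' • v₁)
          = (l + (1 - l)) • a + (l * (-μ) + (1 - l) * μ') • v₁ := by
        simp only [smul_add, smul_smul, add_smul]
        abel
      rw [hform, hzero, zero_smul, add_zero, show l + (1 - l) = 1 by ring, one_smul]
    rw [← hkey]
    exact hcm

end AH

/-- Let R₁, …, R_m ⊆ ℚ^n be semilinear sets satisfying the line condition and
let A be a nonempty affine subspace with aff(Rᵢ ∩ A) = A for each i.  Then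
aff(R₁ ∩ … ∩ R_m ∩ A) = A; in particular this intersection is nonempty. -/
theorem stmt6 {n m : ℕ} (R : Fin m → Set (Fin n → ℚ))
    (hsl : ∀ i, IsSemilinear n (R i)) (hline : ∀ i, LineCondition (R i))
    (A : Set (Fin n → ℚ)) (hAne : A.Nonempty) (hAaff : affHull A = A)
    (h : ∀ i, affHull (R i ∩ A) = A) :
    affHull ((⋂ i, R i) ∩ A) = A ∧ ((⋂ i, R i) ∩ A).Nonempty := by
  have hrank : Module.finrank ℚ (AH.dirV A) ≤ n := by
    have h1 : Module.finrank ℚ (AH.dirV A) ≤ Module.finrank ℚ (Fin n → ℚ) :=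
      Submodule.finrank_le _
    rwa [Module.finrank_fin_fun] at h1
  have hmain := AH.main_ind n m A (fun i => R i ∩ A) hAne hAaff
    (fun i => AH.secClosed_inter (hsl i) (hline i) hAaff) h hrank
  have hset : ((⋂ i, (R i ∩ A)) ∩ A) = ((⋂ i, R i) ∩ A) := by
    ext x
    simp only [Set.mem_inter_iff, Set.mem_iInter]
    constructor
    · rintro ⟨h1, h2⟩
      exact ⟨fun i => (h1 i).1, h2⟩
    · rintro ⟨h1, h2⟩
      exact ⟨fun i => ⟨h1 i, h2⟩, h2⟩
  rw [hset] at hmain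
  refine ⟨hmain, ?_⟩
  apply AH.nonempty_of_affHull
  rw [hmain]
  exact hAne
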